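/- Let 0 < p < 1, let Φ : ℕ → [0, ∞) be nondecreasing and nonnegative, and let (α_k)_{k≥0} be a strictly increasing sequence of positive integers with Σ_k (Φ(M_{α_k})/M_{α_k}^{1/p−1})^{p/2} < ∞. Define β_k := (Φ(M_{α_k})/M_{α_k}^{1/p−1})^{1/2}, a_k := (M_{α_k}^{1/p−1}/λ)(D_{M_{α_k+1}} − D_{M_{α_k}}) with λ = sup_k m_k, and the martingale f = (f^{(A)})_{A≥0}, f^{(A)} := Σ_{{k : α_k < A}} β_k a_k. Then the Vilenkin–Fourier coefficients of f are given by: f̂(j) = (1/λ) · M_{α_k}^{(1/p−1)/2} · Φ(M_{α_k})^{1/2} whenever M_{α_k} ≤ j < M_{α_k+1} for some k, and f̂(j) = 0 whenever j does not lie in any interval [M_{α_k}, M_{α_k+1}). -/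

import Mathlib

open MeasureTheory Filter ENNReal Finset

noncomputable section

/-- The Vilenkin group `G_m`: complete direct product of cyclic groups `ℤ_{m_k}`. -/
abbrev Gm (m : ℕ → ℕ) : Type := ∀ k : ℕ, ZMod (m k)

/-- The generalized powers `M_0 = 1`, `M_{k+1} = m_k M_k`. -/
def Mgen (m : ℕ → ℕ) : ℕ → ℕ
  | 0 => 1
  | k + 1 => m k * Mgen m k

/-- The digits of `n` in the generalized number system `n = Σ_j n_j M_j`. -/
def digit (m : ℕ → ℕ) (n j : ℕ) : ℕ := (n / Mgen m j) % m j

/-- The generalized Rademacher functions `r_k(x) = exp(2πi x_k / m_k)`. -/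
def rade (m : ℕ → ℕ) (k : ℕ) (x : Gm m) : ℂ :=
  Complex.exp (2 * Real.pi * Complex.I * ((x k).val : ℂ) / (m k : ℂ))

/-- The Vilenkin system `ψ_n = Π_k r_k^{n_k}` (all digits `n_k` with `k > n` vanish). -/
def psi (m : ℕ → ℕ) (n : ℕ) (x : Gm m) : ℂ :=
  ∏ k ∈ Finset.range (n + 1), rade m k x ^ digit m n k

/-- The cylinder `I_n(x) = {y : y_0 = x_0, ..., y_{n-1} = x_{n-1}}`. -/
def cyl (m : ℕ → ℕ) (n : ℕ) (x : Gm m) : Set (Gm m) := {y | ∀ j < n, y j = x j}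

/-- Vilenkin–Fourier coefficient of an integrable function. -/
def fcoef (m : ℕ → ℕ) (μ : Measure (Gm m)) (f : Gm m → ℂ) (k : ℕ) : ℂ :=
  ∫ x, f x * (starRingEnd ℂ) (psi m k x) ∂μ

/-- Partial sums of the Vilenkin–Fourier series of a function. -/
def Spart (m : ℕ → ℕ) (μ : Measure (Gm m)) (f : Gm m → ℂ) (n : ℕ) (x : Gm m) : ℂ :=
  ∑ k ∈ Finset.range n, fcoef m μ f k * psi m k x

/-- The Dirichlet kernels `D_n = Σ_{k<n} ψ_k`. -/
def Dker (m : ℕ → ℕ) (n : ℕ) (x : Gm m) : ℂ :=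
  ∑ k ∈ Finset.range n, psi m k x

/-- `f = (f^{(n)})` is a martingale w.r.t. the filtration generated by the cylinders:
each `f^{(n)}` is integrable and, for `n ≤ k`, the conditional expectation of `f^{(k)}`
on the `n`-th σ-algebra (the average on each cylinder `I_n(x)`) equals `f^{(n)}`. -/
def IsVMartingale (m : ℕ → ℕ) (μ : Measure (Gm m)) (f : ℕ → Gm m → ℂ) : Prop :=
  (∀ n, Integrable (f n) μ) ∧
  ∀ n k : ℕ, n ≤ k → ∀ x : Gm m, f n x = (Mgen m n : ℂ) * ∫ t in cyl m n x, f k t ∂μ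

/-- Vilenkin–Fourier coefficient of a martingale: `lim_k ∫ f^{(k)} ψ̄_i dμ`; since the
integral is independent of `k` once `M_k > i`, and `M_{i+1} > i`, we take `k = i+1`. -/
def mfhat (m : ℕ → ℕ) (μ : Measure (Gm m)) (f : ℕ → Gm m → ℂ) (i : ℕ) : ℂ :=
  ∫ x, f (i + 1) x * (starRingEnd ℂ) (psi m i x) ∂μ

/-- The `H_p` (quasi-)norm of a martingale: `‖sup_n |f^{(n)}|‖_{L^p(μ)}`, as an `ℝ≥0∞`. -/
def HpNorm (m : ℕ → ℕ) (μ : Measure (Gm m)) (p : ℝ) (f : ℕ → Gm m → ℂ) : ℝ≥0∞ :=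
  (∫⁻ x, (⨆ n, (‖f n x‖₊ : ℝ≥0∞)) ^ p ∂μ) ^ (1 / p)

section AuxLemmas

set_option maxHeartbeats 1000000

variable {m : ℕ → ℕ}

lemma Mgen_pos (hm : ∀ k, 2 ≤ m k) (N : ℕ) : 0 < Mgen m N := by
  induction N with
  | zero => simp [Mgen]
  | succ n ih => have := hm n; simp only [Mgen]; positivity

lemma two_pow_le_Mgen (hm : ∀ k, 2 ≤ m k) (N : ℕ) : 2 ^ N ≤ Mgen m N := by
  induction N with
  | zero => simp [Mgen]
  | succ n ih => 
    have := hm n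
    calc 2 ^ (n+1) = 2 * 2 ^ n := by ring
    _ ≤ m n * Mgen m n := Nat.mul_le_mul this ih
    _ = Mgen m (n+1) := rfl

lemma lt_Mgen (hm : ∀ k, 2 ≤ m k) (N : ℕ) : N < Mgen m N :=
  lt_of_lt_of_le (Nat.lt_two_pow_self (n := N)) (two_pow_le_Mgen hm N)

lemma Mgen_mono (hm : ∀ k, 2 ≤ m k) : Monotone (Mgen m) := by
  apply monotone_nat_of_le_succ
  intro n
  have h1 := Mgen_pos hm n
  have := hm n
  calc Mgen m n = 1 * Mgen m n := (one_mul _).symm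
  _ ≤ m n * Mgen m n := Nat.mul_le_mul_right _ (by omega)
  _ = Mgen m (n+1) := rfl

lemma Mgen_dvd (hk : k ≤ N) : Mgen m k ∣ Mgen m N := by
  induction N with
  | zero => simp_all
  | succ n ih =>
    rcases Nat.eq_or_lt_of_le hk with h | h
    · subst h; exact dvd_rfl
    · exact (ih (Nat.lt_succ_iff.mp h)).mul_left _

lemma Mgen_factor (hk : k < N) : ∃ s, Mgen m N = Mgen m k * (m k * s) := by
  obtain ⟨u, hu⟩ := Mgen_dvd (m := m) hk
  exact ⟨u, by rw [hu]; simp [Mgen]; ring⟩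

lemma Mgen_prod (N : ℕ) : Mgen m N = ∏ k ∈ Finset.range N, m k := by
  induction N with
  | zero => simp [Mgen]
  | succ n ih => rw [Finset.prod_range_succ, ← ih]; simp [Mgen]; ring

lemma digit_lt (hm : ∀ k, 2 ≤ m k) (n k : ℕ) : digit m n k < m k :=
  Nat.mod_lt _ (by have := hm k; omega)

lemma digit_eq_zero_of_lt (h : n < Mgen m k) : digit m n k = 0 := by
  simp [digit, Nat.div_eq_of_lt h]

lemma digit_eq_zero_of_index (hm : ∀ k, 2 ≤ m k) (h : n < k) : digit m n k = 0 :=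
  digit_eq_zero_of_lt (h.trans (lt_Mgen hm k))

lemma digit_sum (hm : ∀ k, 2 ≤ m k) :
    ∀ N n, n < Mgen m N → ∑ k ∈ Finset.range N, digit m n k * Mgen m k = n := by
  intro N
  induction N with
  | zero => intro n h; simp [Mgen] at h; simp [h]
  | succ N ih =>
    intro n h
    have hMpos := Mgen_pos hm N
    set q := n / Mgen m N with hq
    set r := n % Mgen m N with hr
    have hqr : Mgen m N * q + r = n := Nat.div_add_mod n (Mgen m N)
    have hqlt : q < m N := by
      rw [hq]
      exact Nat.div_lt_iff_lt_mul hMpos |>.mpr (by simpa [Mgen, mul_comm] using h)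
    have hrlt : r < Mgen m N := Nat.mod_lt _ hMpos
    have hdN : digit m n N = q := by simp [digit, ← hq, Nat.mod_eq_of_lt hqlt]
    have hdk : ∀ k < N, digit m n k = digit m r k := by
      intro k hk
      obtain ⟨s, hs⟩ := Mgen_factor (m := m) hk
      have hMk := Mgen_pos hm k
      have hn : n = Mgen m k * (m k * s * q) + r := by rw [← hqr, hs]; ring
      simp only [digit, hn, Nat.mul_add_div hMk]
      rw [mul_assoc (m k) s q, Nat.mul_add_mod]
    rw [Finset.sum_range_succ, hdN,
      Finset.sum_congr rfl (fun k hk => by rw [hdk k (Finset.mem_range.mp hk)]),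
      ih r hrlt]
    rw [mul_comm (Mgen m N) q] at hqr
    omega


-- rade as exp of real multiple of I
lemma rade_eq (k : ℕ) (x : Gm m) :
    rade m k x = Complex.exp (((2 * Real.pi * (x k).val / m k : ℝ) : ℂ) * Complex.I) := by
  unfold rade; congr 1; push_cast; ring

lemma norm_rade (k : ℕ) (x : Gm m) : ‖rade m k x‖ = 1 := by
  rw [rade_eq]; exact Complex.norm_exp_ofReal_mul_I _

lemma norm_psi_le (n : ℕ) (x : Gm m) : ‖psi m n x‖ ≤ 1 := by
  unfold psi
  rw [norm_prod]
  apply le_of_eq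
  rw [Finset.prod_eq_one]
  intro k _
  rw [norm_pow, norm_rade, one_pow]

lemma measurable_rade (k : ℕ) : Measurable (rade m k) := by
  have : rade m k = (fun w : ZMod (m k) =>
      Complex.exp (2 * Real.pi * Complex.I * (w.val : ℂ) / (m k : ℂ))) ∘ (fun x : Gm m => x k) := rfl
  rw [this]
  exact Measurable.of_discrete.comp (measurable_pi_apply k)

lemma measurable_psi (n : ℕ) : Measurable (psi m n) := by
  unfold psi
  exact Finset.measurable_prod _ (fun k _ => (measurable_rade k).pow_const _)

lemma psi_prod (hm : ∀ k, 2 ≤ m k) {n N : ℕ} (h : n < N) (x : Gm m) :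
    psi m n x = ∏ k ∈ Finset.range N, rade m k x ^ digit m n k := by
  unfold psi
  apply Finset.prod_subset (Finset.range_subset_range.mpr h)
  intro k hk hk'
  have : n < k := by
    simp only [Finset.mem_range, not_lt] at hk hk'; omega
  rw [digit_eq_zero_of_index hm this, pow_zero]

lemma measurableSet_cyl (n : ℕ) (x : Gm m) : MeasurableSet (cyl m n x) := by
  have : cyl m n x = ⋂ j ∈ Finset.range n, (fun y : Gm m => y j) ⁻¹' {x j} := by
    ext y; simp [cyl]
  rw [this]
  exact MeasurableSet.biInter (Finset.range n).countable_toSet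
    (fun j _ => measurable_pi_apply j (measurableSet_singleton _))

lemma isProb (μ : Measure (Gm m)) (hμ : ∀ n x, μ (cyl m n x) = ((Mgen m n : ℝ≥0∞))⁻¹) :
    IsProbabilityMeasure μ := by
  constructor
  have : (Set.univ : Set (Gm m)) = cyl m 0 (fun k => 0) := by
    ext y; simp [cyl]
  rw [this, hμ]; simp [Mgen]

def embN (m : ℕ → ℕ) (N : ℕ) (v : ∀ k : Fin N, ZMod (m k)) : Gm m :=
  fun k => if h : k < N then v ⟨k, h⟩ else 0

lemma integral_cylfun (hm : ∀ k, 2 ≤ m k) [∀ k, NeZero (m k)] (μ : Measure (Gm m))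
    (hμ : ∀ n x, μ (cyl m n x) = ((Mgen m n : ℝ≥0∞))⁻¹) (N : ℕ) (g : Gm m → ℂ)
    (hconst : ∀ x y : Gm m, (∀ k < N, x k = y k) → g x = g y) :
    ∫ x, g x ∂μ = (Mgen m N : ℂ)⁻¹ *
      ∑ v ∈ Fintype.piFinset (fun k : Fin N => (Finset.univ : Finset (ZMod (m (k : ℕ))))),
        g (embN m N v) := by
  haveI := isProb μ hμ
  set pF := Fintype.piFinset (fun k : Fin N => (Finset.univ : Finset (ZMod (m (k : ℕ))))) with hpF
  have hrep : ∀ x : Gm m, g x = ∑ v ∈ pF,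
      Set.indicator (cyl m N (embN m N v)) (fun _ => g (embN m N v)) x := by
    intro x
    set v₀ : ∀ k : Fin N, ZMod (m (k : ℕ)) := fun k => x k with hv₀
    rw [Finset.sum_eq_single_of_mem v₀ (by simp [hpF])]
    · have hx : x ∈ cyl m N (embN m N v₀) := by
        intro j hj
        simp [embN, hj, hv₀]
      rw [Set.indicator_of_mem hx]
      exact (hconst _ _ (fun k hk => by simp [embN, hk, hv₀])).symm
    · intro v _ hv
      rw [Set.indicator_of_notMem]
      intro hx
      apply hv
      funext k
      have := hx k k.2
      simp only [embN, k.2, dif_pos] at this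
      rw [hv₀]
      simpa using this.symm
  calc ∫ x, g x ∂μ
      = ∫ x, ∑ v ∈ pF, Set.indicator (cyl m N (embN m N v)) (fun _ => g (embN m N v)) x ∂μ :=
        integral_congr_ae (Filter.Eventually.of_forall hrep)
    _ = ∑ v ∈ pF, ∫ x, Set.indicator (cyl m N (embN m N v)) (fun _ => g (embN m N v)) x ∂μ :=
        integral_finset_sum _ (fun v _ =>
          (integrable_const _).indicator (measurableSet_cyl N _))
    _ = ∑ v ∈ pF, ((Mgen m N : ℝ)⁻¹ : ℂ) * g (embN m N v) := by
        apply Finset.sum_congr rfl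
        intro v _
        rw [integral_indicator_const _ (measurableSet_cyl N _), measureReal_def, hμ]
        rw [Complex.real_smul]
        congr 1
        push_cast
        rw [ENNReal.toReal_inv]
        simp
    _ = (Mgen m N : ℂ)⁻¹ * ∑ v ∈ pF, g (embN m N v) := by
        rw [← Finset.mul_sum]
        norm_num

lemma char_sum (q : ℕ) [NeZero q] (a b : ℕ) (ha : a < q) (hb : b < q) :
    ∑ w : ZMod q, (Complex.exp (2 * Real.pi * Complex.I * (w.val : ℂ) / (q : ℂ))) ^ a *
      (starRingEnd ℂ) ((Complex.exp (2 * Real.pi * Complex.I * (w.val : ℂ) / (q : ℂ)))) ^ b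
    = if a = b then (q : ℂ) else 0 := by
  have hq0 : (q : ℂ) ≠ 0 := Nat.cast_ne_zero.mpr (NeZero.ne q)
  set D : ℂ := (a : ℂ) - (b : ℂ) with hD
  set ζ : ℂ := Complex.exp (2 * Real.pi * Complex.I * D / q) with hζ
  have hterm : ∀ w : ZMod q,
      (Complex.exp (2 * Real.pi * Complex.I * (w.val : ℂ) / (q : ℂ))) ^ a *
      (starRingEnd ℂ) ((Complex.exp (2 * Real.pi * Complex.I * (w.val : ℂ) / (q : ℂ)))) ^ b
      = ζ ^ (w.val) := by
    intro w
    have hconj : (starRingEnd ℂ) (Complex.exp (2 * Real.pi * Complex.I * (w.val : ℂ) / (q : ℂ)))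
        = Complex.exp (-(2 * Real.pi * Complex.I * (w.val : ℂ) / (q : ℂ))) := by
      rw [← Complex.exp_conj]
      congr 1
      rw [map_div₀]
      simp only [map_mul, Complex.conj_I, Complex.conj_natCast, Complex.conj_ofReal, map_ofNat]
      ring
    rw [hconj, ← Complex.exp_nat_mul, ← Complex.exp_nat_mul, ← Complex.exp_add,
      ← Complex.exp_nat_mul]
    congr 1
    simp only [hD]
    field_simp
    ring
  rw [Finset.sum_congr rfl (fun w _ => hterm w)]
  have hre : ∑ w : ZMod q, ζ ^ (w.val) = ∑ t ∈ Finset.range q, ζ ^ t := by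
    apply Finset.sum_nbij' (i := fun w => (ZMod.val w)) (j := fun t => (t : ZMod q))
    · intro w _; exact Finset.mem_range.mpr (ZMod.val_lt w)
    · intro t _; exact Finset.mem_univ _
    · intro w _; exact ZMod.natCast_zmod_val w
    · intro t ht; exact ZMod.val_cast_of_lt (Finset.mem_range.mp ht)
    · intro w _; rfl
  rw [hre]
  by_cases hab : a = b
  · subst hab
    simp [hζ, hD]
  · rw [if_neg hab]
    have hd : ((a : ℤ) - b) ≠ 0 := by
      intro h; apply hab; omega
    have hζq : ζ ^ q = 1 := by
      rw [← Complex.exp_nat_mul]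
      have h1 : (q : ℂ) * (2 * Real.pi * Complex.I * D / q) =
          ((((a : ℤ) - (b : ℤ)) : ℤ) : ℂ) * (2 * Real.pi * Complex.I) := by
        simp only [hD]
        push_cast
        field_simp
      rw [h1, Complex.exp_int_mul_two_pi_mul_I]
    have hζ1 : ζ ≠ 1 := by
      intro hone
      rw [hζ, Complex.exp_eq_one_iff] at hone
      obtain ⟨n, hn⟩ := hone
      have h2 : (2 * (Real.pi : ℂ) * Complex.I) ≠ 0 := by
        simp [Real.pi_ne_zero, Complex.I_ne_zero]
      have hD' : D = (n : ℂ) * q := by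
        field_simp at hn
        have := mul_left_cancel₀ h2 (by linear_combination (2 * (Real.pi : ℂ) * Complex.I) * hn :
          (2 * (Real.pi : ℂ) * Complex.I) * D = (2 * (Real.pi : ℂ) * Complex.I) * ((n : ℂ) * q))
        exact this
      have hint : ((a : ℤ) - b : ℤ) = n * q := by
        rw [hD] at hD'
        exact_mod_cast hD'
      have hdvd : (q : ℤ) ∣ ((a : ℤ) - b) := ⟨n, by rw [hint]; ring⟩
      have := Int.eq_zero_of_abs_lt_dvd hdvd (by rw [abs_lt]; constructor <;> omega)
      exact hd this
    rw [geom_sum_eq hζ1, hζq]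
    simp

lemma orth (hm : ∀ k, 2 ≤ m k) [∀ k, NeZero (m k)] (μ : Measure (Gm m))
    (hμ : ∀ n x, μ (cyl m n x) = ((Mgen m n : ℝ≥0∞))⁻¹) (i j : ℕ) :
    ∫ x, psi m i x * (starRingEnd ℂ) (psi m j x) ∂μ = if i = j then 1 else 0 := by
  set N := max i j + 1 with hN
  have hiN : i < N := lt_of_le_of_lt (le_max_left i j) (Nat.lt_succ_self _)
  have hjN : j < N := lt_of_le_of_lt (le_max_right i j) (Nat.lt_succ_self _)
  have hiM : i < Mgen m N := hiN.trans (lt_Mgen hm N)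
  have hjM : j < Mgen m N := hjN.trans (lt_Mgen hm N)
  have hMne : (Mgen m N : ℂ) ≠ 0 := Nat.cast_ne_zero.mpr (Mgen_pos hm N).ne'
  have hconst : ∀ x y : Gm m, (∀ k < N, x k = y k) →
      psi m i x * (starRingEnd ℂ) (psi m j x) = psi m i y * (starRingEnd ℂ) (psi m j y) := by
    intro x y hxy
    have key : ∀ n, n < N → psi m n x = psi m n y := by
      intro n hn
      rw [psi_prod hm hn x, psi_prod hm hn y]
      apply Finset.prod_congr rfl
      intro k hk
      unfold rade
      rw [hxy k (Finset.mem_range.mp hk)]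
    rw [key i hiN, key j hjN]
  rw [integral_cylfun hm μ hμ N _ hconst]
  -- evaluate psi at embedded points
  have hemb : ∀ (v : ∀ k : Fin N, ZMod (m (k : ℕ))) (n : ℕ), n < N →
      psi m n (embN m N v) = ∏ k : Fin N,
        Complex.exp (2 * Real.pi * Complex.I * (((v k).val : ℕ) : ℂ) / (m (k : ℕ) : ℂ)) ^
          digit m n (k : ℕ) := by
    intro v n hn
    rw [psi_prod hm hn]
    symm
    have h1 : ∀ k : Fin N, Complex.exp (2 * Real.pi * Complex.I * (((v k).val : ℕ) : ℂ) /
          (m (k : ℕ) : ℂ)) ^ digit m n (k : ℕ)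
        = rade m (k : ℕ) (embN m N v) ^ digit m n (k : ℕ) := by
      intro k
      have h2 : embN m N v (k : ℕ) = v k := by
        simp [embN]
      unfold rade
      rw [h2]
    rw [Finset.prod_congr rfl (fun k _ => h1 k)]
    exact Fin.prod_univ_eq_prod_range (fun k => rade m k (embN m N v) ^ digit m n k) N
  have hval : ∀ v ∈ Fintype.piFinset (fun k : Fin N => (Finset.univ : Finset (ZMod (m (k : ℕ))))),
      psi m i (embN m N v) * (starRingEnd ℂ) (psi m j (embN m N v)) =
      ∏ k : Fin N,
        (Complex.exp (2 * Real.pi * Complex.I * (((v k).val : ℕ) : ℂ) / (m (k : ℕ) : ℂ)) ^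
            digit m i (k : ℕ) *
         (starRingEnd ℂ) (Complex.exp (2 * Real.pi * Complex.I * (((v k).val : ℕ) : ℂ) /
            (m (k : ℕ) : ℂ))) ^ digit m j (k : ℕ)) := by
    intro v _
    rw [hemb v i hiN, hemb v j hjN, map_prod, ← Finset.prod_mul_distrib]
    apply Finset.prod_congr rfl
    intro k _
    rw [map_pow]
  rw [Finset.sum_congr rfl hval]
  have hfact := Finset.prod_univ_sum (ι := Fin N) (κ := fun k : Fin N => ZMod (m (k : ℕ)))
      (fun _ => Finset.univ)
      (fun k w => Complex.exp (2 * Real.pi * Complex.I * ((w.val : ℕ) : ℂ) / (m (k : ℕ) : ℂ)) ^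
            digit m i (k : ℕ) *
         (starRingEnd ℂ) (Complex.exp (2 * Real.pi * Complex.I * ((w.val : ℕ) : ℂ) /
            (m (k : ℕ) : ℂ))) ^ digit m j (k : ℕ))
  beta_reduce at hfact
  rw [← hfact]
  have hcoord : ∀ k : Fin N,
      (∑ w : ZMod (m (k : ℕ)),
        (Complex.exp (2 * Real.pi * Complex.I * ((w.val : ℕ) : ℂ) / (m (k : ℕ) : ℂ)) ^
            digit m i (k : ℕ) *
         (starRingEnd ℂ) (Complex.exp (2 * Real.pi * Complex.I * ((w.val : ℕ) : ℂ) /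
            (m (k : ℕ) : ℂ))) ^ digit m j (k : ℕ)))
      = if digit m i (k : ℕ) = digit m j (k : ℕ) then ((m (k : ℕ)) : ℂ) else 0 := by
    intro k
    exact char_sum (m (k : ℕ)) _ _ (digit_lt hm i _) (digit_lt hm j _)
  rw [Finset.prod_congr rfl (fun k _ => hcoord k)]
  by_cases hij : i = j
  · subst hij
    rw [if_pos rfl]
    have h3 : ∏ k : Fin N, (if digit m i (k : ℕ) = digit m i (k : ℕ) then ((m (k : ℕ)) : ℂ) else 0)
        = (Mgen m N : ℂ) := by
      rw [Finset.prod_congr rfl (fun k _ => if_pos rfl)]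
      rw [Fin.prod_univ_eq_prod_range (fun k => ((m k : ℂ))) N, Mgen_prod (m := m) N]
      push_cast
      rfl
    rw [h3, inv_mul_cancel₀ hMne]
  · rw [if_neg hij]
    have hex : ∃ k : Fin N, digit m i (k : ℕ) ≠ digit m j (k : ℕ) := by
      by_contra h
      push_neg at h
      apply hij
      rw [← digit_sum hm N i hiM, ← digit_sum hm N j hjM]
      apply Finset.sum_congr rfl
      intro k hk
      rw [h ⟨k, Finset.mem_range.mp hk⟩]
    obtain ⟨k₀, hk₀⟩ := hex
    have hzero : (∏ k : Fin N, if digit m i (k : ℕ) = digit m j (k : ℕ) then ((m (k : ℕ)) : ℂ) else 0) = 0 :=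
      Finset.prod_eq_zero (Finset.mem_univ k₀) (if_neg hk₀)
    rw [hzero, mul_zero]

end AuxLemmas

set_option maxHeartbeats 1000000 in
/-- The Vilenkin–Fourier coefficients of the martingale
`f^{(A)} = Σ_{α_k < A} β_k a_k` (with `β_k = (Φ(M_{α_k})/M_{α_k}^{1/p-1})^{1/2}` and
`a_k = (M_{α_k}^{1/p-1}/λ)(D_{M_{α_k+1}} - D_{M_{α_k}})`) are
`f̂(j) = (1/λ) M_{α_k}^{(1/p-1)/2} Φ(M_{α_k})^{1/2}` for `M_{α_k} ≤ j < M_{α_k+1}`,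
and `f̂(j) = 0` if `j` lies in no interval `[M_{α_k}, M_{α_k+1})`. -/
theorem fourier_coefficients_of_counterexample_martingale
    (m : ℕ → ℕ) (hm : ∀ k, 2 ≤ m k) (lam : ℕ) (hlam : ∀ k, m k ≤ lam)
    (μ : Measure (Gm m)) (hμ : ∀ n x, μ (cyl m n x) = ((Mgen m n : ℝ≥0∞))⁻¹)
    (p : ℝ) (hp0 : 0 < p) (hp1 : p < 1)
    (Φ : ℕ → ℝ) (hΦ0 : ∀ n, 0 ≤ Φ n) (hΦmono : Monotone Φ)
    (α : ℕ → ℕ) (hα : StrictMono α) (hα0 : ∀ k, 0 < α k)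
    (hsum : Summable fun k =>
      (Φ (Mgen m (α k)) / (Mgen m (α k) : ℝ) ^ (1 / p - 1)) ^ (p / 2)) :
    let β : ℕ → ℝ := fun k =>
      (Φ (Mgen m (α k)) / (Mgen m (α k) : ℝ) ^ (1 / p - 1)) ^ ((1 : ℝ) / 2)
    let a : ℕ → Gm m → ℂ := fun k x =>
      (((Mgen m (α k) : ℝ) ^ (1 / p - 1) / (lam : ℝ) : ℝ) : ℂ) *
        (Dker m (Mgen m (α k + 1)) x - Dker m (Mgen m (α k)) x)
    let f : ℕ → Gm m → ℂ := fun A x =>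
      ∑ k ∈ (Finset.range A).filter (fun k => α k < A), (β k : ℂ) * a k x
    ∀ j : ℕ,
      (∀ k : ℕ, Mgen m (α k) ≤ j → j < Mgen m (α k + 1) →
        mfhat m μ f j =
          (((1 / (lam : ℝ)) * (Mgen m (α k) : ℝ) ^ ((1 / p - 1) / 2) *
            (Φ (Mgen m (α k))) ^ ((1 : ℝ) / 2) : ℝ) : ℂ)) ∧
      ((∀ k : ℕ, ¬(Mgen m (α k) ≤ j ∧ j < Mgen m (α k + 1))) →
        mfhat m μ f j = 0) := by
  intro β a f j
  haveI : ∀ k, NeZero (m k) := fun k => ⟨by have := hm k; omega⟩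
  haveI := isProb μ hμ
  have hlam2 : 2 ≤ lam := le_trans (hm 0) (hlam 0)
  -- integrability of products of psi's
  have hint : ∀ s t : ℕ, Integrable (fun x => psi m s x * (starRingEnd ℂ) (psi m t x)) μ := by
    intro s t
    refine ⟨((measurable_psi s).mul ((RCLike.continuous_conj.measurable).comp (measurable_psi t))).aestronglyMeasurable, ?_⟩
    apply MeasureTheory.HasFiniteIntegral.of_bounded (C := 1)
    filter_upwards with x
    rw [norm_mul]
    calc ‖psi m s x‖ * ‖(starRingEnd ℂ) (psi m t x)‖
        = ‖psi m s x‖ * ‖psi m t x‖ := by rw [RCLike.norm_conj]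
      _ ≤ 1 * 1 := mul_le_mul (norm_psi_le s x) (norm_psi_le t x) (norm_nonneg _) zero_le_one
      _ = 1 := one_mul 1
  set S : Finset ℕ := (Finset.range (j + 1)).filter (fun k => α k < j + 1) with hS
  set c : ℕ → ℂ := fun k => (β k : ℂ) *
      (((Mgen m (α k) : ℝ) ^ (1 / p - 1) / (lam : ℝ) : ℝ) : ℂ) with hc
  have hexp : ∀ x : Gm m, f (j + 1) x * (starRingEnd ℂ) (psi m j x) =
      ∑ k ∈ S, ∑ t ∈ Finset.Ico (Mgen m (α k)) (Mgen m (α k + 1)),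
        c k * (psi m t x * (starRingEnd ℂ) (psi m j x)) := by
    intro x
    have hD : ∀ k : ℕ, Dker m (Mgen m (α k + 1)) x - Dker m (Mgen m (α k)) x
        = ∑ t ∈ Finset.Ico (Mgen m (α k)) (Mgen m (α k + 1)), psi m t x := by
      intro k
      rw [Finset.sum_Ico_eq_sub _ (Mgen_mono hm (Nat.le_succ (α k)))]
      rfl
    show (∑ k ∈ S, (β k : ℂ) * a k x) * (starRingEnd ℂ) (psi m j x) = _
    rw [Finset.sum_mul]
    apply Finset.sum_congr rfl
    intro k _
    show ((β k : ℂ) * ((((Mgen m (α k) : ℝ) ^ (1 / p - 1) / (lam : ℝ) : ℝ) : ℂ) *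
        (Dker m (Mgen m (α k + 1)) x - Dker m (Mgen m (α k)) x))) * (starRingEnd ℂ) (psi m j x) = _
    rw [hD k, Finset.mul_sum, Finset.mul_sum, Finset.sum_mul]
    apply Finset.sum_congr rfl
    intro t _
    simp only [hc]
    ring
  have hval : mfhat m μ f j = ∑ k ∈ S,
      (if j ∈ Finset.Ico (Mgen m (α k)) (Mgen m (α k + 1)) then c k else 0) := by
    unfold mfhat
    rw [integral_congr_ae (Filter.Eventually.of_forall hexp)]
    rw [integral_finset_sum _ (fun k _ => (integrable_finset_sum _
      (fun t _ => ((hint t j).const_mul (c k)))))]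
    apply Finset.sum_congr rfl
    intro k _
    rw [integral_finset_sum _ (fun t _ => ((hint t j).const_mul (c k)))]
    have : ∀ t ∈ Finset.Ico (Mgen m (α k)) (Mgen m (α k + 1)),
        ∫ x, c k * (psi m t x * (starRingEnd ℂ) (psi m j x)) ∂μ
          = if t = j then c k else 0 := by
      intro t _
      rw [MeasureTheory.integral_const_mul, orth hm μ hμ t j]
      simp only [mul_ite, mul_one, mul_zero]
    rw [Finset.sum_congr rfl this]
    exact Finset.sum_ite_eq' _ j (fun _ => c k)
  constructor
  · intro k hk1 hk2
    have hαkM : ∀ n, n ≤ Mgen m (α n) := fun n =>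
      le_trans (hα.le_apply) (le_of_lt (lt_Mgen hm (α n)))
    have hkS : k ∈ S := by
      rw [hS, Finset.mem_filter, Finset.mem_range]
      constructor
      · have : k ≤ Mgen m (α k) := hαkM k
        omega
      · have : α k ≤ Mgen m (α k) := le_of_lt (lt_Mgen hm (α k))
        omega
    rw [hval, Finset.sum_eq_single_of_mem k hkS]
    · rw [if_pos (Finset.mem_Ico.mpr ⟨hk1, hk2⟩)]
      simp only [hc]
      rw [← Complex.ofReal_mul]
      congr 1
      set Mr : ℝ := ((Mgen m (α k) : ℕ) : ℝ) with hMr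
      have hMrpos : 0 < Mr := by
        rw [hMr]; exact_mod_cast Mgen_pos hm (α k)
      set e : ℝ := 1 / p - 1 with he
      have hβ : β k = (Φ (Mgen m (α k))) ^ ((1:ℝ)/2) / Mr ^ (e / 2) := by
        show (Φ (Mgen m (α k)) / Mr ^ e) ^ ((1:ℝ)/2) = _
        rw [Real.div_rpow (hΦ0 _) (Real.rpow_nonneg hMrpos.le e),
          ← Real.rpow_mul hMrpos.le]
        ring_nf
      rw [hβ]
      have hMe : Mr ^ e = Mr ^ (e/2) * Mr ^ (e/2) := by
        rw [← Real.rpow_add hMrpos]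
        ring_nf
      rw [hMe]
      have hne : Mr ^ (e/2) ≠ 0 := (Real.rpow_pos_of_pos hMrpos _).ne'
      field_simp
    · intro k' hk'S hk'k
      rw [if_neg]
      rw [Finset.mem_Ico]
      rintro ⟨h1, h2⟩
      rcases lt_or_gt_of_ne hk'k with h | h
      · have : α k' + 1 ≤ α k := hα h
        have := Mgen_mono hm this
        omega
      · have : α k + 1 ≤ α k' := hα h
        have := Mgen_mono hm this
        omega
  · intro hno
    rw [hval]
    apply Finset.sum_eq_zero
    intro k _
    rw [if_neg]
    rw [Finset.mem_Ico]
    exact hno k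

end
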